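/- Let τ have the exponential distribution with rate λ > 0 and let k_* = √(2λ). Then the solution ξ of ĝ(s) = f̂(k_*s + s²/2), where f̂(s) = λ/(λ+s), has Laplace transform ĝ(s) = (k_*/(k_* + s))², i.e., ξ is Erlang distributed of order 2 with rate k_* = √(2λ). -/

import Mathlib

open MeasureTheory ProbabilityTheory Real

section Aux

open scoped NNReal ENNReal BoundedContinuousFunction

variable {μ ν : Measure ℝ}

lemma ae_mem_Icc_of_conc (hμc : μ (Set.Icc (0:ℝ) 1)ᶜ = 0) :
    ∀ᵐ y ∂μ, y ∈ Set.Icc (0:ℝ) 1 := by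
  rw [MeasureTheory.ae_iff]
  convert hμc using 2
  rfl

/-- Integrability of `c * y ^ n` w.r.t. a measure concentrated on `[0,1]`. -/
lemma integrable_mul_pow_of_conc [IsFiniteMeasure μ] (hμc : μ (Set.Icc (0:ℝ) 1)ᶜ = 0)
    (c : ℝ) (n : ℕ) : Integrable (fun y : ℝ => c * y ^ n) μ := by
  refine Integrable.mono' (integrable_const |c|)
    ((measurable_id.pow_const n).const_mul c).aestronglyMeasurable ?_
  filter_upwards [ae_mem_Icc_of_conc hμc] with y hy
  have h0 : (0:ℝ) ≤ y := hy.1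
  have : |y ^ n| ≤ 1 := by
    rw [abs_of_nonneg (pow_nonneg h0 n)]
    exact pow_le_one₀ h0 hy.2
  calc ‖c * y ^ n‖ = |c| * |y ^ n| := abs_mul _ _
    _ ≤ |c| * 1 := by gcongr
    _ = |c| := mul_one _

lemma integral_polyeval_eq_of_moments [IsFiniteMeasure μ] [IsFiniteMeasure ν]
    (hμc : μ (Set.Icc (0:ℝ) 1)ᶜ = 0) (hνc : ν (Set.Icc (0:ℝ) 1)ᶜ = 0)
    (hmom : ∀ n : ℕ, (∫ y, y ^ n ∂μ) = ∫ y, y ^ n ∂ν) (p : Polynomial ℝ) :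
    (∫ y, p.eval y ∂μ) = ∫ y, p.eval y ∂ν := by
  have hμ' : (∫ y, p.eval y ∂μ)
      = ∑ i ∈ Finset.range (p.natDegree + 1), p.coeff i * ∫ y, y ^ i ∂μ := by
    rw [show (∫ y, p.eval y ∂μ)
        = ∫ y, (∑ i ∈ Finset.range (p.natDegree + 1), p.coeff i * y ^ i) ∂μ from
      integral_congr_ae (ae_of_all _ fun y => Polynomial.eval_eq_sum_range y),
      integral_finset_sum _ fun i _ => integrable_mul_pow_of_conc hμc _ _]
    simp_rw [integral_const_mul]
  have hν' : (∫ y, p.eval y ∂ν)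
      = ∑ i ∈ Finset.range (p.natDegree + 1), p.coeff i * ∫ y, y ^ i ∂ν := by
    rw [show (∫ y, p.eval y ∂ν)
        = ∫ y, (∑ i ∈ Finset.range (p.natDegree + 1), p.coeff i * y ^ i) ∂ν from
      integral_congr_ae (ae_of_all _ fun y => Polynomial.eval_eq_sum_range y),
      integral_finset_sum _ fun i _ => integrable_mul_pow_of_conc hνc _ _]
    simp_rw [integral_const_mul]
  rw [hμ', hν']
  exact Finset.sum_congr rfl fun i _ => by rw [hmom i]

lemma integrable_polyeval_of_conc [IsFiniteMeasure μ] (hμc : μ (Set.Icc (0:ℝ) 1)ᶜ = 0)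
    (p : Polynomial ℝ) : Integrable (fun y : ℝ => p.eval y) μ := by
  have : (fun y : ℝ => p.eval y)
      = fun y : ℝ => ∑ i ∈ Finset.range (p.natDegree + 1), p.coeff i * y ^ i := by
    funext y; exact Polynomial.eval_eq_sum_range y
  rw [this]
  exact integrable_finset_sum _ fun i _ => integrable_mul_pow_of_conc hμc _ _

/-- Two finite measures concentrated on `[0,1]` with the same moments are equal. -/
lemma measure_eq_of_moments [IsFiniteMeasure μ] [IsFiniteMeasure ν]
    (hμc : μ (Set.Icc (0:ℝ) 1)ᶜ = 0) (hνc : ν (Set.Icc (0:ℝ) 1)ᶜ = 0)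
    (hmom : ∀ n : ℕ, (∫ y, y ^ n ∂μ) = ∫ y, y ^ n ∂ν) : μ = ν := by
  -- real integrals of bounded continuous nonneg functions agree
  have key : ∀ f : ℝ →ᵇ ℝ≥0, (∫ y, (f y : ℝ) ∂μ) = ∫ y, (f y : ℝ) ∂ν := by
    intro f
    set g : ℝ → ℝ := fun y => (f y : ℝ) with hg
    have hgc : Continuous g := NNReal.continuous_coe.comp f.continuous
    have hgiμ : Integrable g μ := f.integrable_of_nnreal (μ := μ)
    have hgiν : Integrable g ν := f.integrable_of_nnreal (μ := ν)
    set C : ℝ := (μ Set.univ).toReal + (ν Set.univ).toReal with hC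
    have hC0 : 0 ≤ C := by positivity
    have hbound : ∀ ε : ℝ, 0 < ε → |(∫ y, g y ∂μ) - ∫ y, g y ∂ν| ≤ ε * C := by
      intro ε hε
      obtain ⟨p, hp⟩ := exists_polynomial_near_of_continuousOn 0 1 g hgc.continuousOn ε hε
      have hpiμ : Integrable (fun y => p.eval y) μ := integrable_polyeval_of_conc hμc p
      have hpiν : Integrable (fun y => p.eval y) ν := integrable_polyeval_of_conc hνc p
      have hpeq : (∫ y, p.eval y ∂μ) = ∫ y, p.eval y ∂ν :=
        integral_polyeval_eq_of_moments hμc hνc hmom p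
      have habsμ : |(∫ y, g y ∂μ) - ∫ y, p.eval y ∂μ| ≤ ε * (μ Set.univ).toReal := by
        rw [← integral_sub hgiμ hpiμ]
        calc |∫ y, (g y - p.eval y) ∂μ| ≤ ∫ y, |g y - p.eval y| ∂μ := by
              simpa [Real.norm_eq_abs] using
                norm_integral_le_integral_norm (μ := μ) (fun y => g y - p.eval y)
          _ ≤ ∫ _, ε ∂μ := by
              refine integral_mono_ae (hgiμ.sub hpiμ).abs (integrable_const ε) ?_
              filter_upwards [ae_mem_Icc_of_conc hμc] with y hy
              have := hp y hy
              rw [abs_sub_comm] at this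
              exact this.le
          _ = ε * (μ Set.univ).toReal := by simp [mul_comm]; exact Or.inl rfl
      have habsν : |(∫ y, g y ∂ν) - ∫ y, p.eval y ∂ν| ≤ ε * (ν Set.univ).toReal := by
        rw [← integral_sub hgiν hpiν]
        calc |∫ y, (g y - p.eval y) ∂ν| ≤ ∫ y, |g y - p.eval y| ∂ν := by
              simpa [Real.norm_eq_abs] using
                norm_integral_le_integral_norm (μ := ν) (fun y => g y - p.eval y)
          _ ≤ ∫ _, ε ∂ν := by
              refine integral_mono_ae (hgiν.sub hpiν).abs (integrable_const ε) ?_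
              filter_upwards [ae_mem_Icc_of_conc hνc] with y hy
              have := hp y hy
              rw [abs_sub_comm] at this
              exact this.le
          _ = ε * (ν Set.univ).toReal := by simp [mul_comm]; exact Or.inl rfl
      calc |(∫ y, g y ∂μ) - ∫ y, g y ∂ν|
          = |((∫ y, g y ∂μ) - ∫ y, p.eval y ∂μ)
              - ((∫ y, g y ∂ν) - ∫ y, p.eval y ∂ν)| := by rw [hpeq]; ring_nf
        _ ≤ |(∫ y, g y ∂μ) - ∫ y, p.eval y ∂μ|
              + |(∫ y, g y ∂ν) - ∫ y, p.eval y ∂ν| := abs_sub _ _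
        _ ≤ ε * (μ Set.univ).toReal + ε * (ν Set.univ).toReal := by
            exact add_le_add habsμ habsν
        _ = ε * C := by rw [hC]; ring
    by_contra hne
    have hd : 0 < |(∫ y, g y ∂μ) - ∫ y, g y ∂ν| := by
      rw [abs_pos, sub_ne_zero]; exact hne
    set d := |(∫ y, g y ∂μ) - ∫ y, g y ∂ν| with hdd
    have hεpos : 0 < d / (2 * (C + 1)) := by positivity
    have := hbound _ hεpos
    have hlt : d / (2 * (C + 1)) * C < d := by
      rw [div_mul_eq_mul_div, div_lt_iff₀ (by positivity)]
      nlinarith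
    linarith
  apply ext_of_forall_lintegral_eq_of_IsFiniteMeasure
  intro f
  have h1 : (∫⁻ x, (f x : ℝ≥0∞) ∂μ) ≠ ⊤ := (f.lintegral_lt_top_of_nnreal μ).ne
  have h2 : (∫⁻ x, (f x : ℝ≥0∞) ∂ν) ≠ ⊤ := (f.lintegral_lt_top_of_nnreal ν).ne
  rw [← ENNReal.toReal_eq_toReal_iff' h1 h2, f.toReal_lintegral_coe_eq_integral μ,
    f.toReal_lintegral_coe_eq_integral ν]
  exact key f

/-- Two probability measures on `ℝ` concentrated on `[0, ∞)` with the same Laplace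
transform are equal. -/
lemma measure_eq_of_laplace [IsProbabilityMeasure μ] [IsProbabilityMeasure ν]
    (hμ0 : μ (Set.Iio 0) = 0) (hν0 : ν (Set.Iio 0) = 0)
    (h : ∀ s : ℝ, 0 ≤ s → (∫ x, Real.exp (-s * x) ∂μ) = ∫ x, Real.exp (-s * x) ∂ν) :
    μ = ν := by
  set φ : ℝ → ℝ := fun x => Real.exp (-x) with hφ
  have hφm : Measurable φ := (measurable_id.neg).exp
  have hL : Measurable fun y : ℝ => -Real.log y := Real.measurable_log.neg
  have hid : (fun y : ℝ => -Real.log y) ∘ φ = id := by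
    funext x; simp [hφ, Real.log_exp]
  -- concentration of mapped measures
  have hconc : ∀ (ρ : Measure ℝ), ρ (Set.Iio 0) = 0 → (ρ.map φ) (Set.Icc (0:ℝ) 1)ᶜ = 0 := by
    intro ρ hρ
    rw [Measure.map_apply hφm (measurableSet_Icc.compl)]
    refine measure_mono_null ?_ hρ
    intro x hx
    simp only [Set.mem_preimage, Set.mem_compl_iff, Set.mem_Icc, not_and_or, not_le, hφ] at hx
    rcases hx with hx | hx
    · exact absurd (Real.exp_nonneg _) (not_le.mpr hx)
    · simp only [Set.mem_Iio]
      by_contra hc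
      push_neg at hc
      have : Real.exp (-x) ≤ 1 := Real.exp_le_one_iff.mpr (neg_nonpos.mpr hc)
      linarith
  -- moments of mapped measures
  have hmap : ∀ (ρ : Measure ℝ) (n : ℕ),
      (∫ y, y ^ n ∂(ρ.map φ)) = ∫ x, Real.exp (-(n : ℝ) * x) ∂ρ := by
    intro ρ n
    rw [integral_map hφm.aemeasurable (continuous_pow n).aestronglyMeasurable]
    refine integral_congr_ae (ae_of_all _ fun x => ?_)
    show Real.exp (-x) ^ n = Real.exp (-(n : ℝ) * x)
    rw [← Real.exp_nat_mul]
    ring_nf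
  have hmom : ∀ n : ℕ, (∫ y, y ^ n ∂(μ.map φ)) = ∫ y, y ^ n ∂(ν.map φ) := by
    intro n
    rw [hmap μ n, hmap ν n]
    exact h (n : ℝ) (Nat.cast_nonneg n)
  have : IsProbabilityMeasure (μ.map φ) := Measure.isProbabilityMeasure_map hφm.aemeasurable
  have : IsProbabilityMeasure (ν.map φ) := Measure.isProbabilityMeasure_map hφm.aemeasurable
  have heq : μ.map φ = ν.map φ :=
    measure_eq_of_moments (hconc μ hμ0) (hconc ν hν0) hmom
  calc μ = μ.map ((fun y : ℝ => -Real.log y) ∘ φ) := by rw [hid, Measure.map_id]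
    _ = (μ.map φ).map (fun y : ℝ => -Real.log y) := (Measure.map_map hL hφm).symm
    _ = (ν.map φ).map (fun y : ℝ => -Real.log y) := by rw [heq]
    _ = ν.map ((fun y : ℝ => -Real.log y) ∘ φ) := Measure.map_map hL hφm
    _ = ν := by rw [hid, Measure.map_id]

/-- Laplace transform of the Gamma(2, k) distribution. -/
lemma gamma_two_laplace {k : ℝ} (hk : 0 < k) {s : ℝ} (hs : 0 ≤ s) :
    (∫ x, Real.exp (-s * x) ∂(gammaMeasure 2 k)) = (k / (k + s)) ^ 2 := by
  have hks : 0 < k + s := by linarith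
  have hmeas : Measurable fun x : ℝ => Real.exp (-s * x) :=
    ((measurable_id.const_mul (-s)).exp)
  have hnn : 0 ≤ᵐ[gammaMeasure 2 k] fun x : ℝ => Real.exp (-s * x) :=
    ae_of_all _ fun x => (Real.exp_pos _).le
  rw [integral_eq_lintegral_of_nonneg_ae hnn hmeas.aestronglyMeasurable]
  have hpt : ∀ x : ℝ,
      gammaPDF 2 k x * ENNReal.ofReal (Real.exp (-s * x))
        = ENNReal.ofReal ((k / (k + s)) ^ 2) * gammaPDF 2 (k + s) x := by
    intro x
    by_cases hx : 0 ≤ x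
    · rw [gammaPDF_of_nonneg hx, gammaPDF_of_nonneg hx,
        ← ENNReal.ofReal_mul (by positivity), ← ENNReal.ofReal_mul (by positivity)]
      congr 1
      have hΓ : Real.Gamma 2 = 1 := by
        rw [(by norm_num : (2:ℝ) = 1 + 1), Real.Gamma_add_one (by norm_num), Real.Gamma_one]
        norm_num
      have hx1 : x ^ ((2:ℝ) - 1) = x := by
        rw [show (2:ℝ) - 1 = 1 by norm_num, Real.rpow_one]
      have hk1 : k ^ (2:ℝ) = k ^ 2 := by
        rw [show (2:ℝ) = ((2:ℕ) : ℝ) by norm_num, Real.rpow_natCast]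
      have h2 : (k + s) ^ (2:ℝ) = (k + s) ^ 2 := by
        rw [show (2:ℝ) = ((2:ℕ) : ℝ) by norm_num, Real.rpow_natCast]
      rw [hΓ, hx1, hk1, h2]
      have hexp : Real.exp (-(k * x)) * Real.exp (-s * x)
          = Real.exp (-((k + s) * x)) := by
        rw [← Real.exp_add]; ring_nf
      have hcoef : (k / (k + s)) ^ 2 * (k + s) ^ 2 = k ^ 2 := by
        field_simp
      calc k ^ 2 / 1 * x * Real.exp (-(k * x)) * Real.exp (-s * x)
          = k ^ 2 * x * (Real.exp (-(k * x)) * Real.exp (-s * x)) := by ring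
        _ = k ^ 2 * x * Real.exp (-((k + s) * x)) := by rw [hexp]
        _ = (k / (k + s)) ^ 2 * ((k + s) ^ 2 / 1 * x * Real.exp (-((k + s) * x))) := by
            rw [← hcoef]; ring
    · push_neg at hx
      rw [gammaPDF_of_neg hx, gammaPDF_of_neg hx, zero_mul, mul_zero]
  rw [gammaMeasure, lintegral_withDensity_eq_lintegral_mul _ (show Measurable (gammaPDF 2 k) from (measurable_gammaPDFReal 2 k).ennreal_ofReal)
    hmeas.ennreal_ofReal]
  simp only [Pi.mul_apply]
  calc (∫⁻ x, gammaPDF 2 k x * ENNReal.ofReal (Real.exp (-s * x))).toReal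
      = (∫⁻ x, ENNReal.ofReal ((k / (k + s)) ^ 2) * gammaPDF 2 (k + s) x).toReal := by
        congr 1
        exact lintegral_congr fun x => hpt x
    _ = (ENNReal.ofReal ((k / (k + s)) ^ 2) * ∫⁻ x, gammaPDF 2 (k + s) x).toReal := by
        rw [lintegral_const_mul _ (show Measurable (gammaPDF 2 (k + s)) from (measurable_gammaPDFReal 2 (k + s)).ennreal_ofReal)]
    _ = (k / (k + s)) ^ 2 := by
        rw [lintegral_gammaPDF_eq_one (by norm_num) (by linarith), mul_one,
          ENNReal.toReal_ofReal (by positivity)]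

end Aux

/-- Minimal solution for the exponential target: if `τ ~ Exp(λ)` (Laplace transform
`f̂(s) = λ/(λ+s)`) and `k_* = √(2λ)`, then the solution `ξ` of
`ĝ(s) = f̂(k_*s + s²/2)` has Laplace transform `(k_*/(k_*+s))²`, i.e. `ξ` is
Erlang of order 2 (Gamma(2, k_*)) with rate `k_* = √(2λ)`. -/
theorem minimal_solution_exponential
    {Ω : Type*} [MeasureSpace Ω] [IsProbabilityMeasure (volume : Measure Ω)]
    (lam : ℝ) (hlam : 0 < lam) (kst : ℝ) (hkst : kst = Real.sqrt (2 * lam))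
    (ξ : Ω → ℝ) (hξm : Measurable ξ) (hξ : ∀ ω, 0 ≤ ξ ω)
    (hsol : ∀ s : ℝ, 0 ≤ s →
      (∫ ω, Real.exp (-s * ξ ω)) = lam / (lam + (kst * s + s ^ 2 / 2))) :
    (∀ s : ℝ, 0 ≤ s →
        (∫ ω, Real.exp (-s * ξ ω)) = (kst / (kst + s)) ^ 2) ∧
      Measure.map ξ volume = gammaMeasure 2 kst := by
  have hk : 0 < kst := by
    rw [hkst]; exact Real.sqrt_pos.mpr (by linarith)
  have hk2 : kst ^ 2 = 2 * lam := by
    rw [hkst, Real.sq_sqrt (by linarith)]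
  have halg : ∀ s : ℝ, 0 ≤ s →
      lam / (lam + (kst * s + s ^ 2 / 2)) = (kst / (kst + s)) ^ 2 := by
    intro s hs
    have hden1 : lam + (kst * s + s ^ 2 / 2) ≠ 0 := by positivity
    have hden2 : kst + s ≠ 0 := by positivity
    rw [div_pow, div_eq_div_iff hden1 (by positivity)]
    nlinarith [hk2]
  have hlap : ∀ s : ℝ, 0 ≤ s →
      (∫ ω, Real.exp (-s * ξ ω)) = (kst / (kst + s)) ^ 2 := by
    intro s hs
    rw [hsol s hs, halg s hs]
  refine ⟨hlap, ?_⟩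
  have hinst : IsProbabilityMeasure (Measure.map ξ (volume : Measure Ω)) :=
    Measure.isProbabilityMeasure_map hξm.aemeasurable
  have hinst2 : IsProbabilityMeasure (gammaMeasure 2 kst) :=
    isProbabilityMeasure_gammaMeasure (by norm_num) hk
  refine measure_eq_of_laplace ?_ ?_ ?_
  · rw [Measure.map_apply hξm measurableSet_Iio]
    convert measure_empty
    · ext ω
      simp only [Set.mem_preimage, Set.mem_Iio, Set.mem_empty_iff_false, iff_false, not_lt]
      exact hξ ω
    · infer_instance
  · rw [gammaMeasure, withDensity_apply _ measurableSet_Iio]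
    exact lintegral_gammaPDF_of_nonpos le_rfl
  · intro s hs
    rw [gamma_two_laplace hk hs, ← hlap s hs]
    exact integral_map hξm.aemeasurable
      ((measurable_id.const_mul (-s)).exp).aestronglyMeasurable
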